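/- Let F be a field and n ∈ F nonzero. Let T* be the 5×5 matrix with rows (1,0,0,0,0),(n^{-1},1,0,0,0),(n^{-1},0,1,0,0),(n^{-1},0,0,1,0),(n^{-2},n^{-1},n^{-1},n^{-1},1). Then T* is invertible with inverse having rows (1,0,0,0,0),(-n^{-1},1,0,0,0),(-n^{-1},0,1,0,0),(-n^{-1},0,0,1,0),(2n^{-2},-n^{-1},-n^{-1},-n^{-1},1), and T* E^{*(1)} (T*)^{-1} = diag(0,1,0,0,1), T* E^{*(2)} (T*)^{-1} = diag(0,0,1,0,1), T* E^{*(3)} (T*)^{-1} = diag(0,0,0,1,1), where the E^{*(i)} are as defined. In particular each E^{*(i)} is diagonalizable. -/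
import Mathlib


open Matrix

set_option linter.unusedVariables false


def Emat {F : Type*} [Field F] (n : F) : Fin 3 → Matrix (Fin 5) (Fin 5) F :=
  ![!![1,0,1,1,0; 0,1,0,0,1; 0,0,0,0,0; 0,0,0,0,0; 0,0,0,0,0],
    !![1,1,0,1,0; 0,0,0,0,0; 0,0,1,0,1; 0,0,0,0,0; 0,0,0,0,0],
    !![1,1,1,0,0; 0,0,0,0,0; 0,0,0,0,0; 0,0,0,1,1; 0,0,0,0,0]]

def Estar {F : Type*} [Field F] (n : F) : Fin 3 → Matrix (Fin 5) (Fin 5) F :=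
  ![!![0,0,0,0,0; n⁻¹,1,0,0,0; 0,0,0,0,0; 0,0,0,0,0; 0,0,n⁻¹,n⁻¹,1],
    !![0,0,0,0,0; 0,0,0,0,0; n⁻¹,0,1,0,0; 0,0,0,0,0; 0,n⁻¹,0,n⁻¹,1],
    !![0,0,0,0,0; 0,0,0,0,0; 0,0,0,0,0; n⁻¹,0,0,1,0; 0,n⁻¹,n⁻¹,0,1]]

set_option maxHeartbeats 2000000 in
theorem stmt_19 {F : Type*} [Field F] (n : F) (hn : n ≠ 0) :
    let T : Matrix (Fin 5) (Fin 5) F :=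
      !![1,0,0,0,0; n⁻¹,1,0,0,0; n⁻¹,0,1,0,0; n⁻¹,0,0,1,0; n⁻¹^2,n⁻¹,n⁻¹,n⁻¹,1]
    let T' : Matrix (Fin 5) (Fin 5) F :=
      !![1,0,0,0,0; -n⁻¹,1,0,0,0; -n⁻¹,0,1,0,0; -n⁻¹,0,0,1,0; 2*n⁻¹^2,-n⁻¹,-n⁻¹,-n⁻¹,1]
    T * T' = 1 ∧ T' * T = 1 ∧
    T * Estar n 0 * T' = Matrix.diagonal ![0,1,0,0,1] ∧
    T * Estar n 1 * T' = Matrix.diagonal ![0,0,1,0,1] ∧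
    T * Estar n 2 * T' = Matrix.diagonal ![0,0,0,1,1] ∧
    (∀ i : Fin 3, ∃ (P : GL (Fin 5) F) (dvec : Fin 5 → F),
      (P : Matrix (Fin 5) (Fin 5) F) * Estar n i * ((P⁻¹ : GL (Fin 5) F) : Matrix (Fin 5) (Fin 5) F) = Matrix.diagonal dvec) := by
  intro T T'
  have h1 : T * T' = 1 := by
    ext i j
    fin_cases i <;> fin_cases j <;>
      simp [T, T', Matrix.mul_apply, Fin.sum_univ_five, Matrix.one_apply] <;> ring
  have h2 : T' * T = 1 := by
    ext i j
    fin_cases i <;> fin_cases j <;>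
      simp [T, T', Matrix.mul_apply, Fin.sum_univ_five, Matrix.one_apply] <;> ring
  have h3 : ∀ i : Fin 3, T * Estar n i * T' = Matrix.diagonal
      (![![0,1,0,0,1], ![0,0,1,0,1], ![0,0,0,1,1]] i) := by
    intro i
    fin_cases i <;>
      · ext a b
        fin_cases a <;> fin_cases b <;>
          simp [T, T', Estar, Matrix.mul_apply, Fin.sum_univ_five, Matrix.diagonal] <;> ring
  refine ⟨h1, h2, h3 0, h3 1, h3 2, ?_⟩
  intro i
  refine ⟨⟨T, T', h1, h2⟩, ![![0,1,0,0,1], ![0,0,1,0,1], ![0,0,0,1,1]] i, ?_⟩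
  have hinv : (((⟨T, T', h1, h2⟩ : GL (Fin 5) F)⁻¹ : GL (Fin 5) F) : Matrix (Fin 5) (Fin 5) F) = T' := rfl
  rw [hinv]
  exact h3 i
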